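/- Let (M, Σ_M, μ_M) be a measure space, h : M → N strongly measurable, and suppose (N, d_N) is a complete geodesic metric space that is globally nonpositively curved (NPC): for every constant speed geodesic γ : [0,1] → N, every z ∈ N and every t ∈ [0,1], d_N(z, γ(t))² ≤ (1−t) d_N(z, γ(0))² + t d_N(z, γ(1))² − (1−t)t d_N(γ(0), γ(1))². Then (L²_h(M,N), D₂) is a complete geodesic space that is globally NPC: for every constant speed geodesic c : [0,1] → L²_h(M,N), every F ∈ L²_h(M,N) and every t ∈ [0,1], D₂(F, c(t))² ≤ (1−t) D₂(F, c(0))² + t D₂(F, c(1))² − (1−t)t D₂(c(0), c(1))². (No separability of N is required in the NPC case.) -/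

import Mathlib

set_option linter.unusedSectionVars false

open MeasureTheory ENNReal Set Filter Topology TopologicalSpace

noncomputable section

namespace NLS

variable {α : Type*} [MeasurableSpace α] {N : Type*} [MetricSpace N]
  [MeasurableSpace N] [BorelSpace N]

/-- "Strongly measurable": Borel measurable with separable range. -/
def SM (f : α → N) : Prop :=
  Measurable f ∧ TopologicalSpace.IsSeparable (Set.range f)

theorem SM.aesm {f : α → N} (hf : SM f) (μ : Measure α) :
    AEStronglyMeasurable f μ :=
  (stronglyMeasurable_iff_measurable_separable.2 ⟨hf.1, hf.2⟩).aestronglyMeasurable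

/-- The `L^p` (extended) distance between two maps with values in a metric space;
for `p < ∞` it is `(∫ d(f x, g x)^p dμ)^{1/p}` and for `p = ∞` the essential supremum
of `x ↦ d(f x, g x)`. -/
def Dp (μ : Measure α) (p : ℝ≥0∞) (f g : α → N) : ℝ≥0∞ :=
  eLpNorm (fun x => dist (f x) (g x)) p μ

theorem Dp_self (μ : Measure α) (p : ℝ≥0∞) (f : α → N) : Dp μ p f f = 0 := by
  unfold Dp
  simp only [dist_self]
  exact eLpNorm_zero'

theorem Dp_comm (μ : Measure α) (p : ℝ≥0∞) (f g : α → N) : Dp μ p f g = Dp μ p g f := by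
  unfold Dp
  simp only [dist_comm]

theorem Dp_triangle {μ : Measure α} {p : ℝ≥0∞} (hp : 1 ≤ p) {f g k : α → N}
    (hf : AEStronglyMeasurable f μ) (hg : AEStronglyMeasurable g μ)
    (hk : AEStronglyMeasurable k μ) :
    Dp μ p f k ≤ Dp μ p f g + Dp μ p g k := by
  have h1 : Dp μ p f k ≤
      eLpNorm ((fun x => dist (f x) (g x)) + fun x => dist (g x) (k x)) p μ := by
    refine eLpNorm_mono fun x => ?_
    simp only [Pi.add_apply, Real.norm_eq_abs]
    rw [abs_of_nonneg dist_nonneg]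
    exact (dist_triangle (f x) (g x) (k x)).trans (le_abs_self _)
  exact h1.trans (eLpNorm_add_le (hf.dist hg) (hg.dist hk) hp)

/-- The nonlinear Lebesgue space `L^p_h(α, N)` with base map `h`, presented by
representatives: Borel measurable, separably valued maps at finite `D_p`-distance
from `h`.  Two representatives at `D_p`-distance `0` (equivalently, `μ`-a.e. equal)
represent the same element of the quotient nonlinear Lebesgue space; accordingly the
canonical structure below is a pseudometric space whose metric (separation) quotient is
the actual nonlinear Lebesgue space.  All topological and Borel-measurability notions for
the quotient correspond exactly to those of this pseudometric space. -/
def NLp (μ : Measure α) (h : α → N) (_hh : SM h) (p : ℝ≥0∞) : Type _ :=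
  {f : α → N // SM f ∧ Dp μ p f h ≠ ∞}

namespace NLp

variable {μ : Measure α} {h : α → N} {hh : SM h} {p : ℝ≥0∞}

def pem (μ : Measure α) (h : α → N) (hh : SM h) (p : ℝ≥0∞) (hp : 1 ≤ p) :
    PseudoEMetricSpace (NLp μ h hh p) where
  edist f g := Dp μ p f.1 g.1
  edist_self f := Dp_self μ p f.1
  edist_comm f g := Dp_comm μ p f.1 g.1
  edist_triangle f g k := Dp_triangle hp (f.2.1.aesm μ) (g.2.1.aesm μ) (k.2.1.aesm μ)

theorem dp_ne_top (hp : 1 ≤ p) (f g : NLp μ h hh p) : Dp μ p f.1 g.1 ≠ ∞ := by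
  have htri := Dp_triangle hp (f.2.1.aesm μ) (hh.aesm μ) (g.2.1.aesm μ)
  have h2 : Dp μ p h g.1 ≠ ∞ := by rw [Dp_comm]; exact g.2.2
  exact ne_top_of_le_ne_top (ENNReal.add_ne_top.2 ⟨f.2.2, h2⟩) htri

/-- The `D_p` pseudometric on the nonlinear Lebesgue space. -/
instance [hp : Fact (1 ≤ p)] : PseudoMetricSpace (NLp μ h hh p) :=
  @PseudoEMetricSpace.toPseudoMetricSpace _ (pem μ h hh p hp.out)
    (fun f g => dp_ne_top hp.out f g)

instance [Fact (1 ≤ p)] : MeasurableSpace (NLp μ h hh p) := borel _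
instance [Fact (1 ≤ p)] : BorelSpace (NLp μ h hh p) := ⟨rfl⟩

theorem edist_def [Fact (1 ≤ p)] (f g : NLp μ h hh p) :
    edist f g = Dp μ p f.1 g.1 := rfl

theorem dist_def [Fact (1 ≤ p)] (f g : NLp μ h hh p) :
    dist f g = (Dp μ p f.1 g.1).toReal := rfl

end NLp

/-- Absolutely continuous curves: `c ∈ AC^p([a,b], X)`. -/
def MemACp {X : Type*} [PseudoMetricSpace X] (p : ℝ≥0∞) (a b : ℝ) (c : ℝ → X) : Prop :=
  ∃ m : ℝ → ℝ, MemLp m p (volume.restrict (Set.Icc a b)) ∧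
    ∀ s t : ℝ, a ≤ s → s ≤ t → t ≤ b → dist (c s) (c t) ≤ ∫ r in s..t, m r

/-- The metric derivative of a curve at `t` (limit of difference quotients within `[a,b]`). -/
def mder {X : Type*} [PseudoMetricSpace X] (a b : ℝ) (c : ℝ → X) (t : ℝ) : ℝ :=
  limUnder (𝓝[Set.Icc a b \ {t}] t) fun s => dist (c s) (c t) / |s - t|


section Geometry

variable {Y : Type*} [MetricSpace Y]

/-- Constant speed geodesic on `[0,1]`. -/
def Geod (γ : ℝ → Y) : Prop :=
  ∀ s ∈ Set.Icc (0:ℝ) 1, ∀ t ∈ Set.Icc (0:ℝ) 1,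
    dist (γ s) (γ t) = |s - t| * dist (γ 0) (γ 1)

/-- Geodesic space on `[0,1]`. -/
def GeodSp (Y : Type*) [MetricSpace Y] : Prop :=
  ∀ y y' : Y, ∃ γ : ℝ → Y, γ 0 = y ∧ γ 1 = y' ∧ Geod γ

/-- Global NPC comparison inequality. -/
def NPCsp (Y : Type*) [MetricSpace Y] : Prop :=
  ∀ γ : ℝ → Y, Geod γ → ∀ z : Y, ∀ t ∈ Set.Icc (0:ℝ) 1,
    dist z (γ t) ^ 2 ≤ (1 - t) * dist z (γ 0) ^ 2 + t * dist z (γ 1) ^ 2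
      - (1 - t) * t * dist (γ 0) (γ 1) ^ 2

theorem Geod.restrict {γ : ℝ → Y} (hγ : Geod γ) {a b : ℝ} (ha : a ∈ Set.Icc (0:ℝ) 1)
    (hb : b ∈ Set.Icc (0:ℝ) 1) : Geod (fun s => γ (a + s * (b - a))) := by
  have key : ∀ u ∈ Set.Icc (0:ℝ) 1, a + u * (b - a) ∈ Set.Icc (0:ℝ) 1 := by
    intro u hu
    constructor
    · nlinarith [hu.1, hu.2, ha.1, ha.2, hb.1, hb.2]
    · nlinarith [hu.1, hu.2, ha.1, ha.2, hb.1, hb.2]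
  intro s hs t ht
  dsimp only
  have e0 : a + (0:ℝ) * (b - a) = a := by ring
  have e1 : a + (1:ℝ) * (b - a) = b := by ring
  rw [hγ _ (key s hs) _ (key t ht), e0, e1, hγ a ha b hb]
  have e2 : a + s * (b - a) - (a + t * (b - a)) = (s - t) * (b - a) := by ring
  rw [e2, abs_mul, abs_sub_comm a b]
  ring

theorem Geod.reverse {γ : ℝ → Y} (hγ : Geod γ) : Geod (fun s => γ (1 - s)) := by
  have key : ∀ u ∈ Set.Icc (0:ℝ) 1, 1 - u ∈ Set.Icc (0:ℝ) 1 := by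
    intro u hu; exact ⟨by linarith [hu.2], by linarith [hu.1]⟩
  intro s hs t ht
  dsimp only
  rw [hγ _ (key s hs) _ (key t ht)]
  norm_num
  rw [dist_comm (γ 1) (γ 0)]
  rw [abs_sub_comm]

theorem geod_mid_common_start (hnpc : NPCsp Y) {γ τ : ℝ → Y} (hγ : Geod γ) (hτ : Geod τ)
    (h0 : γ 0 = τ 0) : dist (γ 2⁻¹) (τ 2⁻¹) ≤ dist (γ 1) (τ 1) / 2 := by
  have hhalf : (2⁻¹:ℝ) ∈ Set.Icc (0:ℝ) 1 := by norm_num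
  have h01 : (0:ℝ) ∈ Set.Icc (0:ℝ) 1 := by norm_num
  have h11 : (1:ℝ) ∈ Set.Icc (0:ℝ) 1 := by norm_num
  have H1 := hnpc τ hτ (γ 2⁻¹) 2⁻¹ hhalf
  have H2 := hnpc γ hγ (τ 1) 2⁻¹ hhalf
  have e1 : dist (γ 2⁻¹) (γ 0) = 2⁻¹ * dist (γ 0) (γ 1) := by
    rw [hγ 2⁻¹ hhalf 0 h01]; norm_num
  have e2 : dist (γ 2⁻¹) (τ 0) = 2⁻¹ * dist (γ 0) (γ 1) := by rw [← h0, e1]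
  have e3 : dist (τ 1) (γ 0) = dist (τ 0) (τ 1) := by rw [h0, dist_comm]
  rw [dist_comm (τ 1) (γ 2⁻¹)] at H2
  rw [e3] at H2
  rw [e2] at H1
  have hd : 0 ≤ dist (γ 1) (τ 1) := dist_nonneg
  have hx : 0 ≤ dist (γ 2⁻¹) (τ 2⁻¹) := dist_nonneg
  have hcomm : dist (τ 1) (γ 1) = dist (γ 1) (τ 1) := dist_comm _ _
  rw [hcomm] at H2
  nlinarith [H1, H2, sq_nonneg (dist (γ 2⁻¹) (τ 2⁻¹) - dist (γ 1) (τ 1) / 2),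
    sq_nonneg (dist (γ 2⁻¹) (τ 2⁻¹) + dist (γ 1) (τ 1) / 2)]

theorem geod_mid (hgs : GeodSp Y) (hnpc : NPCsp Y) {γ σ : ℝ → Y} (hγ : Geod γ) (hσ : Geod σ) :
    dist (γ 2⁻¹) (σ 2⁻¹) ≤ (dist (γ 0) (σ 0) + dist (γ 1) (σ 1)) / 2 := by
  obtain ⟨τ, hτ0, hτ1, hτ⟩ := hgs (γ 0) (σ 1)
  have A : dist (γ 2⁻¹) (τ 2⁻¹) ≤ dist (γ 1) (τ 1) / 2 :=
    geod_mid_common_start hnpc hγ hτ hτ0.symm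
  have B : dist ((fun s => σ (1 - s)) 2⁻¹) ((fun s => τ (1 - s)) 2⁻¹)
      ≤ dist ((fun s => σ (1 - s)) 1) ((fun s => τ (1 - s)) 1) / 2 := by
    apply geod_mid_common_start hnpc hσ.reverse hτ.reverse
    show σ (1 - 0) = τ (1 - 0)
    norm_num [hτ1]
  norm_num at B
  rw [hτ1] at A
  rw [hτ0] at B
  calc dist (γ 2⁻¹) (σ 2⁻¹) ≤ dist (γ 2⁻¹) (τ 2⁻¹) + dist (τ 2⁻¹) (σ 2⁻¹) := dist_triangle _ _ _
    _ ≤ dist (γ 1) (σ 1) / 2 + dist (σ 0) (γ 0) / 2 := by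
        rw [dist_comm (τ 2⁻¹) (σ 2⁻¹)]; linarith [A, B]
    _ = (dist (γ 0) (σ 0) + dist (γ 1) (σ 1)) / 2 := by rw [dist_comm (σ 0) (γ 0)]; ring

theorem geod_unique (hnpc : NPCsp Y) {γ σ : ℝ → Y} (hγ : Geod γ) (hσ : Geod σ)
    (h0 : γ 0 = σ 0) (h1 : γ 1 = σ 1) {t : ℝ} (ht : t ∈ Set.Icc (0:ℝ) 1) : γ t = σ t := by
  have h01 : (0:ℝ) ∈ Set.Icc (0:ℝ) 1 := by norm_num
  have h11 : (1:ℝ) ∈ Set.Icc (0:ℝ) 1 := by norm_num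
  have H := hnpc σ hσ (γ t) t ht
  have e0 : dist (γ t) (σ 0) = t * dist (σ 0) (σ 1) := by
    rw [← h0, hγ t ht 0 h01, h0, h1, sub_zero, abs_of_nonneg ht.1]
  have e1 : dist (γ t) (σ 1) = (1 - t) * dist (σ 0) (σ 1) := by
    rw [← h1, hγ t ht 1 h11, h0, h1]
    rw [abs_of_nonpos (by linarith [ht.2] : t - 1 ≤ 0)]
    ring
  rw [e0, e1] at H
  have hd : dist (γ t) (σ t) = 0 := by nlinarith [dist_nonneg (x := γ t) (y := σ t), sq_nonneg (dist (γ t) (σ t))]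
  exact dist_eq_zero.1 hd

theorem geod_dist_le (hgs : GeodSp Y) (hnpc : NPCsp Y) {γ σ : ℝ → Y} (hγ : Geod γ)
    (hσ : Geod σ) {t : ℝ} (ht : t ∈ Set.Icc (0:ℝ) 1) :
    dist (γ t) (σ t) ≤ dist (γ 0) (σ 0) + dist (γ 1) (σ 1) := by
  set D := dist (γ 0) (σ 0) + dist (γ 1) (σ 1) with hD
  have hD0 : 0 ≤ D := by positivity
  have dyadic : ∀ n : ℕ, ∀ k : ℕ, k ≤ 2 ^ n →
      dist (γ ((k : ℝ) / 2 ^ n)) (σ ((k : ℝ) / 2 ^ n)) ≤ D := by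
    intro n
    induction n with
    | zero =>
      intro k hk
      interval_cases k
      · norm_num
        rw [hD]; linarith [dist_nonneg (x := γ 1) (y := σ 1), dist_nonneg (x := γ 0) (y := σ 0)]
      · norm_num
        rw [hD]; linarith [dist_nonneg (x := γ 0) (y := σ 0)]
    | succ n IH =>
      intro k hk
      rcases Nat.even_or_odd k with ⟨j, hj⟩ | ⟨j, hj⟩
      · have hcast : (k : ℝ) / 2 ^ (n + 1) = (j : ℝ) / 2 ^ n := by
          subst hj; push_cast; ring
        rw [hcast]
        exact IH j (by omega)
      · -- k = 2 j + 1
        have hj1 : j + 1 ≤ 2 ^ n := by omega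
        have hj0 : (j : ℝ) ≤ 2 ^ n := by exact_mod_cast (show j ≤ 2 ^ n by omega)
        set a : ℝ := (j : ℝ) / 2 ^ n with hadef
        set b : ℝ := ((j : ℝ) + 1) / 2 ^ n with hbdef
        have hpow : (0:ℝ) < 2 ^ n := by positivity
        have ha : a ∈ Set.Icc (0:ℝ) 1 := by
          constructor
          · positivity
          · rw [hadef, div_le_one hpow]; exact hj0
        have hb : b ∈ Set.Icc (0:ℝ) 1 := by
          constructor
          · positivity
          · rw [hbdef, div_le_one hpow]
            have : ((j:ℝ) + 1) = ((j + 1 : ℕ) : ℝ) := by push_cast; ring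
            rw [this]; exact_mod_cast hj1
        have hmid := geod_mid hgs hnpc (hγ.restrict ha hb) (hσ.restrict ha hb)
        have ea : a + (0:ℝ) * (b - a) = a := by ring
        have eb : a + (1:ℝ) * (b - a) = b := by ring
        have em : a + (2⁻¹:ℝ) * (b - a) = (k : ℝ) / 2 ^ (n + 1) := by
          subst hj; rw [hadef, hbdef]; push_cast; field_simp; ring
        rw [ea, eb, em] at hmid
        have hIa := IH j (by omega)
        have hIb := IH (j + 1) hj1
        have hacast : (j : ℝ) / 2 ^ n = a := rfl
        have hbcast : ((j + 1 : ℕ) : ℝ) / 2 ^ n = b := by rw [hbdef]; push_cast; ring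
        rw [hacast] at hIa
        rw [hbcast] at hIb
        linarith [hmid, hIa, hIb]
  refine le_of_forall_pos_le_add fun ε hε => ?_
  set C := dist (γ 0) (γ 1) + dist (σ 0) (σ 1) + 1 with hC
  have hC0 : 0 < C := by positivity
  obtain ⟨n, hn⟩ := exists_pow_lt_of_lt_one (div_pos hε hC0) (by norm_num : (1:ℝ)/2 < 1)
  have hpow : (0:ℝ) < 2 ^ n := by positivity
  set k := ⌊t * 2 ^ n⌋₊ with hk
  have hkle : (k : ℝ) ≤ t * 2 ^ n := Nat.floor_le (by nlinarith [ht.1])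
  have hklt : t * 2 ^ n < (k : ℝ) + 1 := Nat.lt_floor_add_one _
  have hk2 : k ≤ 2 ^ n := by
    have h2 : (k : ℝ) ≤ ((2 ^ n : ℕ) : ℝ) := by push_cast; nlinarith [ht.2]
    exact_mod_cast h2
  set q : ℝ := (k : ℝ) / 2 ^ n with hq
  have hqmem : q ∈ Set.Icc (0:ℝ) 1 := by
    constructor
    · positivity
    · rw [hq, div_le_one hpow]; nlinarith [ht.2]
  have hq1 : q ≤ t := by rw [hq, div_le_iff₀ hpow]; exact hkle
  have hq2 : t - q ≤ (1/2) ^ n := by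
    rw [hq]
    have : t - (k:ℝ)/2^n < 1 / 2 ^ n := by
      rw [sub_lt_iff_lt_add, ← add_div, lt_div_iff₀ hpow]
      linarith [hklt]
    calc t - (k:ℝ)/2^n ≤ 1 / 2^n := this.le
      _ = (1/2)^n := by rw [div_pow]; norm_num
  have h1 : dist (γ t) (γ q) = |t - q| * dist (γ 0) (γ 1) := hγ t ht q hqmem
  have h2 : dist (σ q) (σ t) = |q - t| * dist (σ 0) (σ 1) := hσ q hqmem t ht
  have habs : |t - q| = t - q := abs_of_nonneg (by linarith)
  have habs2 : |q - t| = t - q := by rw [abs_sub_comm]; exact habs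
  have hdya := dyadic n k hk2
  have hp0 : (0:ℝ) ≤ (1/2)^n := by positivity
  calc dist (γ t) (σ t) ≤ dist (γ t) (γ q) + dist (γ q) (σ q) + dist (σ q) (σ t) :=
        dist_triangle4 _ _ _ _
    _ ≤ (t - q) * dist (γ 0) (γ 1) + D + (t - q) * dist (σ 0) (σ 1) := by
        rw [h1, h2, habs, habs2]; linarith [hdya]
    _ ≤ D + (1/2)^n * C := by
        nlinarith [dist_nonneg (x := γ 0) (y := γ 1), dist_nonneg (x := σ 0) (y := σ 1), hq2,
          hq1, hp0]
    _ ≤ D + ε := by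
        have : (1/2:ℝ)^n * C < ε := (lt_div_iff₀ hC0).1 hn
        linarith

theorem geo_family_lipschitz (hgs : GeodSp Y) (hnpc : NPCsp Y) {G : Y → Y → ℝ → Y}
    (hG0 : ∀ y y', G y y' 0 = y) (hG1 : ∀ y y', G y y' 1 = y')
    (hGg : ∀ y y', Geod (G y y')) {t : ℝ} (ht : t ∈ Set.Icc (0:ℝ) 1) :
    LipschitzWith 2 (fun p : Y × Y => G p.1 p.2 t) := by
  apply LipschitzWith.of_dist_le_mul
  intro p q
  have h := geod_dist_le hgs hnpc (hGg p.1 p.2) (hGg q.1 q.2) ht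
  rw [hG0, hG0, hG1, hG1] at h
  have h1 : dist p.1 q.1 ≤ dist p q := by rw [Prod.dist_eq]; exact le_max_left _ _
  have h2 : dist p.2 q.2 ≤ dist p q := by rw [Prod.dist_eq]; exact le_max_right _ _
  calc dist (G p.1 p.2 t) (G q.1 q.2 t) ≤ dist p.1 q.1 + dist p.2 q.2 := h
    _ ≤ ((2 : NNReal) : ℝ) * dist p q := by push_cast; linarith

end Geometry

theorem eLpNorm_two_sq {α : Type*} [MeasurableSpace α] (μ : Measure α) (f : α → ℝ)
    (hf : ∀ x, 0 ≤ f x) :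
    eLpNorm f 2 μ ^ 2 = ∫⁻ x, ENNReal.ofReal (f x) ^ 2 ∂μ := by
  have h1 : eLpNorm f 2 μ = (∫⁻ x, ENNReal.ofReal (f x) ^ 2 ∂μ) ^ (1/2 : ℝ) := by
    rw [eLpNorm_eq_lintegral_rpow_enorm_toReal two_ne_zero ENNReal.ofNat_ne_top]
    simp only [ENNReal.toReal_ofNat]
    congr 1
    apply lintegral_congr; intro x
    rw [← ofReal_norm, Real.norm_of_nonneg (hf x), ← ENNReal.rpow_natCast]
    norm_num
  rw [h1, ← ENNReal.rpow_natCast _ 2, ← ENNReal.rpow_mul]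
  norm_num

instance : Fact ((1 : ℝ≥0∞) ≤ 2) := ⟨one_le_two⟩

/-- If `N` is a complete geodesic metric space which is globally nonpositively curved
(NPC, i.e. satisfies the comparison inequality along every constant speed geodesic), then
so is `(L²_h(M,N), D₂)`: it is complete, geodesic, and satisfies the global NPC comparison
inequality.  (No separability of `N` is required.) -/
theorem stmt17 {α : Type*} [MeasurableSpace α] {N : Type*} [MetricSpace N]
    [MeasurableSpace N] [BorelSpace N] [CompleteSpace N]
    (μ : Measure α) (h : α → N) (hh : SM h)
    (hgeoN : ∀ y y' : N, ∃ γ : ℝ → N, γ 0 = y ∧ γ 1 = y' ∧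
      ∀ s ∈ Set.Icc (0:ℝ) 1, ∀ t ∈ Set.Icc (0:ℝ) 1,
        dist (γ s) (γ t) = |s - t| * dist y y')
    (hnpcN : ∀ γ : ℝ → N,
      (∀ s ∈ Set.Icc (0:ℝ) 1, ∀ t ∈ Set.Icc (0:ℝ) 1,
        dist (γ s) (γ t) = |s - t| * dist (γ 0) (γ 1)) →
      ∀ z : N, ∀ t ∈ Set.Icc (0:ℝ) 1,
        dist z (γ t) ^ 2 ≤ (1 - t) * dist z (γ 0) ^ 2 + t * dist z (γ 1) ^ 2
          - (1 - t) * t * dist (γ 0) (γ 1) ^ 2) :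
    CompleteSpace (NLp μ h hh 2) ∧
    (∀ F F' : NLp μ h hh 2, ∃ c : ℝ → NLp μ h hh 2, c 0 = F ∧ c 1 = F' ∧
      ∀ s ∈ Set.Icc (0:ℝ) 1, ∀ t ∈ Set.Icc (0:ℝ) 1,
        dist (c s) (c t) = |s - t| * dist F F') ∧
    (∀ c : ℝ → NLp μ h hh 2,
      (∀ s ∈ Set.Icc (0:ℝ) 1, ∀ t ∈ Set.Icc (0:ℝ) 1,
        dist (c s) (c t) = |s - t| * dist (c 0) (c 1)) →
      ∀ F : NLp μ h hh 2, ∀ t ∈ Set.Icc (0:ℝ) 1,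
        dist F (c t) ^ 2 ≤ (1 - t) * dist F (c 0) ^ 2 + t * dist F (c 1) ^ 2
          - (1 - t) * t * dist (c 0) (c 1) ^ 2) := by
  classical
  have hgs : GeodSp N := by
    intro y y'
    obtain ⟨γ, h0, h1, hγ⟩ := hgeoN y y'
    refine ⟨γ, h0, h1, ?_⟩
    intro s hs t ht
    rw [hγ s hs t ht, h0, h1]
  have hnpc : NPCsp N := fun γ hγ => hnpcN γ hγ
  have hSM : ∀ f : α → N, SM f → StronglyMeasurable f := fun f hf =>
    stronglyMeasurable_iff_measurable_separable.2 ⟨hf.1, hf.2⟩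
  have hedist_meas : ∀ f g : α → N, SM f → SM g →
      Measurable fun x => edist (f x) (g x) :=
    fun f g hf hg =>
      (continuous_edist.comp_stronglyMeasurable ((hSM f hf).prodMk (hSM g hg))).measurable
  have hDpsq : ∀ f g : α → N, Dp μ 2 f g ^ 2 = ∫⁻ x, edist (f x) (g x) ^ 2 ∂μ := by
    intro f g
    unfold Dp
    rw [eLpNorm_two_sq μ _ (fun x => dist_nonneg)]
    exact lintegral_congr fun x => by rw [edist_dist]
  have hJne : ∀ F G : NLp μ h hh 2, (∫⁻ x, edist (F.1 x) (G.1 x) ^ 2 ∂μ) ≠ ∞ := by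
    intro F G
    rw [← hDpsq]
    exact ENNReal.pow_ne_top (NLp.dp_ne_top one_le_two F G)
  have hJdist : ∀ F G : NLp μ h hh 2,
      (∫⁻ x, edist (F.1 x) (G.1 x) ^ 2 ∂μ) = ENNReal.ofReal (dist F G) ^ 2 := by
    intro F G
    rw [← hDpsq]
    congr 1
    rw [← NLp.edist_def, edist_dist]
  have hdist_sq : ∀ F G : NLp μ h hh 2,
      dist F G ^ 2 = (∫⁻ x, edist (F.1 x) (G.1 x) ^ 2 ∂μ).toReal := by
    intro F G
    rw [hJdist F G, ← ENNReal.ofReal_pow dist_nonneg, ENNReal.toReal_ofReal (by positivity)]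
  -- ## Completeness
  have hcomplete : CompleteSpace (NLp μ h hh 2) := by
    apply Metric.complete_of_cauchySeq_tendsto
    intro u hu
    obtain ⟨φ, hφmono, hφ⟩ := hu.subseq_mem
      (V := fun n => {p | dist p.1 p.2 < (1/2)^n})
      (fun n => Metric.dist_mem_uniformity (by positivity))
    set g : ℕ → NLp μ h hh 2 := u ∘ φ with hg
    have hgd : ∀ n, dist (g n) (g (n+1)) ≤ (1/2)^n := by
      intro n
      rw [dist_comm]
      exact (hφ n).le
    have hchain : ∀ n m, n ≤ m → dist (g n) (g m) ≤ 2 * (1/2)^n := by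
      intro n m hnm
      calc dist (g n) (g m) ≤ ∑ i ∈ Finset.Ico n m, dist (g i) (g (i+1)) :=
            dist_le_Ico_sum_dist g hnm
        _ ≤ ∑ i ∈ Finset.Ico n m, (1/2:ℝ)^i := Finset.sum_le_sum fun i _ => hgd i
        _ = (1/2)^n * ∑ i ∈ Finset.range (m-n), (1/2:ℝ)^i := by
            rw [Finset.sum_Ico_eq_sum_range, Finset.mul_sum]
            exact Finset.sum_congr rfl fun i _ => by rw [pow_add]
        _ ≤ (1/2)^n * 2 := by
            have h1 := sum_geometric_two_le (m - n)
            have h0 : (0:ℝ) ≤ (1/2)^n := by positivity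
            nlinarith
        _ = 2 * (1/2)^n := by ring
    set e : ℕ → α → ℝ := fun n x => dist ((g n).1 x) ((g (n+1)).1 x) with he
    have heLp : ∀ n, eLpNorm (e n) 2 μ ≤ ENNReal.ofReal ((1/2)^n) := by
      intro n
      have h1 : eLpNorm (e n) 2 μ = edist (g n) (g (n+1)) := (NLp.edist_def _ _).symm
      rw [h1, edist_dist]
      exact ENNReal.ofReal_le_ofReal (hgd n)
    set ψ : ℕ → α → ℝ := fun m x => ∑ n ∈ Finset.range m, e n x with hψ
    have hψnn : ∀ m x, 0 ≤ ψ m x := fun m x => Finset.sum_nonneg fun n _ => dist_nonneg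
    have hψmeas : ∀ m, Measurable fun x => ENNReal.ofReal (ψ m x) ^ 2 := by
      intro m
      apply Measurable.pow_const
      apply Measurable.ennreal_ofReal
      exact Finset.measurable_sum _ fun n _ =>
        ((hSM _ (g n).2.1).dist (hSM _ (g (n+1)).2.1)).measurable
    have hψLp : ∀ m, ∫⁻ x, ENNReal.ofReal (ψ m x) ^ 2 ∂μ ≤ ENNReal.ofReal 2 ^ 2 := by
      intro m
      have h2 : eLpNorm (ψ m) 2 μ ≤ ∑ n ∈ Finset.range m, eLpNorm (e n) 2 μ := by
        have h3 := eLpNorm_sum_le (μ := μ) (p := 2) (f := fun n => e n) (s := Finset.range m)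
          (fun i _ => ((g i).2.1.aesm μ).dist ((g (i+1)).2.1.aesm μ)) one_le_two
        refine le_trans (le_of_eq ?_) h3
        congr 1
        funext x
        simp [hψ]
      have h1 : eLpNorm (ψ m) 2 μ ≤ ENNReal.ofReal 2 := by
        refine h2.trans ?_
        calc ∑ n ∈ Finset.range m, eLpNorm (e n) 2 μ
            ≤ ∑ n ∈ Finset.range m, ENNReal.ofReal ((1/2)^n) :=
              Finset.sum_le_sum fun n _ => heLp n
          _ = ENNReal.ofReal (∑ n ∈ Finset.range m, (1/2:ℝ)^n) :=
              (ENNReal.ofReal_sum_of_nonneg fun n _ => by positivity).symm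
          _ ≤ ENNReal.ofReal 2 := ENNReal.ofReal_le_ofReal (sum_geometric_two_le m)
      calc ∫⁻ x, ENNReal.ofReal (ψ m x) ^ 2 ∂μ = eLpNorm (ψ m) 2 μ ^ 2 :=
            (eLpNorm_two_sq μ _ (hψnn m)).symm
        _ ≤ ENNReal.ofReal 2 ^ 2 := pow_le_pow_left' h1 2
    have hTmeas : Measurable fun x => ⨆ m, ENNReal.ofReal (ψ m x) ^ 2 :=
      Measurable.iSup hψmeas
    have hTle : ∫⁻ x, (⨆ m, ENNReal.ofReal (ψ m x) ^ 2) ∂μ ≤ ENNReal.ofReal 2 ^ 2 := by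
      rw [lintegral_iSup hψmeas ?_]
      · exact iSup_le hψLp
      · intro m m' hmm x
        dsimp only
        refine pow_le_pow_left' (ENNReal.ofReal_le_ofReal ?_) 2
        exact Finset.sum_le_sum_of_subset_of_nonneg
          (Finset.range_subset_range.2 hmm) (fun n _ _ => dist_nonneg)
    have hae : ∀ᵐ x ∂μ, ∃ y : N, Tendsto (fun n => (g n).1 x) atTop (𝓝 y) := by
      have hfin := ae_lt_top hTmeas
        (ne_top_of_le_ne_top (ENNReal.pow_ne_top ENNReal.ofReal_ne_top) hTle)
      filter_upwards [hfin] with x hx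
      set B := (⨆ m, ENNReal.ofReal (ψ m x) ^ 2).toReal with hB
      have hbdd : ∀ m, ψ m x ≤ B + 1 := by
        intro m
        have h1 : ENNReal.ofReal (ψ m x) ^ 2 ≤ ⨆ m, ENNReal.ofReal (ψ m x) ^ 2 :=
          le_iSup (fun m => ENNReal.ofReal (ψ m x) ^ 2) m
        have h2 : (ψ m x) ^ 2 ≤ B := by
          have h3 := ENNReal.toReal_mono hx.ne h1
          rwa [← ENNReal.ofReal_pow (hψnn m x), ENNReal.toReal_ofReal (by positivity)] at h3
        nlinarith [hψnn m x, ENNReal.toReal_nonneg (a := ⨆ m, ENNReal.ofReal (ψ m x) ^ 2)]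
      have hsum : Summable fun n => e n x :=
        summable_of_sum_range_le (fun n => dist_nonneg) hbdd
      exact cauchySeq_tendsto_of_complete
        (cauchySeq_of_dist_le_of_summable _ (fun n => le_refl _) hsum)
    obtain ⟨flim, hflim_meas, hflim⟩ :=
      measurable_limit_of_tendsto_metrizable_ae (fun n => ((g n).2.1.1).aemeasurable) hae
    set U : Set N := closure (⋃ n, Set.range ((g n).1)) with hU
    have hUsep : IsSeparable U := (isSeparable_iUnion.2 fun n => (g n).2.1.2).closure
    have hUmeas : MeasurableSet (flim ⁻¹' U) := hflim_meas isClosed_closure.measurableSet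
    set f' : α → N := fun x => if flim x ∈ U then flim x else h x with hf'
    have hf'SM : SM f' := by
      constructor
      · exact Measurable.ite hUmeas hflim_meas hh.1
      · apply (hUsep.union hh.2).mono
        rintro y ⟨x, rfl⟩
        by_cases hx : flim x ∈ U
        · rw [hf']; dsimp only; rw [if_pos hx]; exact Or.inl hx
        · rw [hf']; dsimp only; rw [if_neg hx]; exact Or.inr (mem_range_self x)
    have hf'tend : ∀ᵐ x ∂μ, Tendsto (fun n => (g n).1 x) atTop (𝓝 (f' x)) := by
      filter_upwards [hflim] with x hx
      have hmem : flim x ∈ U := mem_closure_of_tendsto hx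
        (Eventually.of_forall fun n => mem_iUnion.2 ⟨n, mem_range_self x⟩)
      have h4 : f' x = flim x := if_pos hmem
      rw [h4]
      exact hx
    have hemeas2 : ∀ n m : ℕ, Measurable fun x => edist ((g n).1 x) ((g m).1 x) ^ 2 :=
      fun n m => (hedist_meas _ _ (g n).2.1 (g m).2.1).pow_const 2
    have hFatou : ∀ n, (∫⁻ x, edist ((g n).1 x) (f' x) ^ 2 ∂μ)
        ≤ ENNReal.ofReal (2 * (1/2)^n) ^ 2 := by
      intro n
      have h1 : ∀ᵐ x ∂μ, edist ((g n).1 x) (f' x) ^ 2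
          = liminf (fun m => edist ((g n).1 x) ((g m).1 x) ^ 2) atTop := by
        filter_upwards [hf'tend] with x hx
        have h2 : Tendsto (fun m => edist ((g n).1 x) ((g m).1 x) ^ 2) atTop
            (𝓝 (edist ((g n).1 x) (f' x) ^ 2)) :=
          ((ENNReal.continuous_pow 2).tendsto _).comp (tendsto_const_nhds.edist hx)
        exact h2.liminf_eq.symm
      calc (∫⁻ x, edist ((g n).1 x) (f' x) ^ 2 ∂μ)
          = ∫⁻ x, liminf (fun m => edist ((g n).1 x) ((g m).1 x) ^ 2) atTop ∂μ :=
            lintegral_congr_ae h1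
        _ ≤ liminf (fun m => ∫⁻ x, edist ((g n).1 x) ((g m).1 x) ^ 2 ∂μ) atTop :=
            lintegral_liminf_le fun m => hemeas2 n m
        _ ≤ ENNReal.ofReal (2 * (1/2)^n) ^ 2 := by
            apply liminf_le_of_frequently_le'
            apply Eventually.frequently
            filter_upwards [eventually_ge_atTop n] with m hm
            rw [hJdist (g n) (g m)]
            exact pow_le_pow_left' (ENNReal.ofReal_le_ofReal (hchain n m hm)) 2
    have hDpf'g0 : Dp μ 2 f' ((g 0).1) ≠ ∞ := by
      have h1 : Dp μ 2 f' ((g 0).1) ^ 2 = ∫⁻ x, edist ((g 0).1 x) (f' x) ^ 2 ∂μ := by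
        rw [hDpsq]
        exact lintegral_congr fun x => by rw [edist_comm]
      have h2 : Dp μ 2 f' ((g 0).1) ^ 2 ≠ ∞ := by
        rw [h1]
        exact ne_top_of_le_ne_top (ENNReal.pow_ne_top ENNReal.ofReal_ne_top) (hFatou 0)
      intro hc
      rw [hc] at h2
      simp at h2
    have hDpf'h : Dp μ 2 f' h ≠ ∞ := by
      have htri := Dp_triangle one_le_two (hf'SM.aesm μ) ((g 0).2.1.aesm μ) (hh.aesm μ)
      exact ne_top_of_le_ne_top (ENNReal.add_ne_top.2 ⟨hDpf'g0, (g 0).2.2⟩) htri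
    set Flim : NLp μ h hh 2 := ⟨f', hf'SM, hDpf'h⟩ with hFlim
    have hdistle : ∀ n, dist (g n) Flim ≤ 2 * (1/2)^n := by
      intro n
      have h1 : dist (g n) Flim ^ 2 = (∫⁻ x, edist ((g n).1 x) (f' x) ^ 2 ∂μ).toReal :=
        hdist_sq (g n) Flim
      have h2 : (∫⁻ x, edist ((g n).1 x) (f' x) ^ 2 ∂μ).toReal ≤ (2 * (1/2:ℝ)^n) ^ 2 := by
        have h3 := ENNReal.toReal_mono (ENNReal.pow_ne_top ENNReal.ofReal_ne_top) (hFatou n)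
        rwa [← ENNReal.ofReal_pow (by positivity), ENNReal.toReal_ofReal (by positivity)] at h3
      have h4 : dist (g n) Flim ^ 2 ≤ (2 * (1/2:ℝ)^n) ^ 2 := by rw [h1]; exact h2
      nlinarith [dist_nonneg (x := g n) (y := Flim), (by positivity : (0:ℝ) ≤ 2 * (1/2:ℝ)^n)]
    have htend : Tendsto g atTop (𝓝 Flim) := by
      rw [tendsto_iff_dist_tendsto_zero]
      refine squeeze_zero (fun n => dist_nonneg) hdistle ?_
      have h5 : Tendsto (fun n : ℕ => (1/2:ℝ)^n) atTop (𝓝 0) :=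
        tendsto_pow_atTop_nhds_zero_of_lt_one (by norm_num) (by norm_num)
      simpa using h5.const_mul 2
    exact ⟨Flim, tendsto_nhds_of_cauchySeq_of_subseq hu hφmono.tendsto_atTop htend⟩
  -- ## geodesics with NPC property
  have hgs2 := hgs
  choose G hG0 hG1 hGg using hgs2
  have key : ∀ F F' : NLp μ h hh 2, ∃ c : ℝ → NLp μ h hh 2,
      c 0 = F ∧ c 1 = F' ∧
      (∀ s ∈ Set.Icc (0:ℝ) 1, ∀ t ∈ Set.Icc (0:ℝ) 1,
        dist (c s) (c t) = |s - t| * dist F F') ∧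
      (∀ Z : NLp μ h hh 2, ∀ t ∈ Set.Icc (0:ℝ) 1,
        dist Z (c t) ^ 2 ≤ (1-t) * dist Z F ^ 2 + t * dist Z F' ^ 2
          - (1-t) * t * dist F F' ^ 2) := by
    intro F F'
    set π : ℝ → ℝ := fun t => max 0 (min 1 t) with hπdef
    have hπmem : ∀ t, π t ∈ Set.Icc (0:ℝ) 1 :=
      fun t => ⟨le_max_left _ _, max_le (by norm_num) (min_le_left _ _)⟩
    have hπid : ∀ t ∈ Set.Icc (0:ℝ) 1, π t = t := by
      intro t ht
      rw [hπdef]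
      dsimp only
      rw [min_eq_right ht.2, max_eq_right ht.1]
    set γ : ℝ → α → N := fun t x => G (F.1 x) (F'.1 x) (π t) with hγdef
    have hptd : ∀ s t : ℝ, ∀ x, dist (γ s x) (γ t x)
        = |π s - π t| * dist (F.1 x) (F'.1 x) := by
      intro s t x
      have h1 := hGg (F.1 x) (F'.1 x) (π s) (hπmem s) (π t) (hπmem t)
      rw [hγdef]
      dsimp only
      rw [h1, hG0, hG1]
    have hsm : ∀ t, SM (γ t) := by
      intro t
      have hc : Continuous fun p : N × N => G p.1 p.2 (π t) :=
        (geo_family_lipschitz hgs hnpc hG0 hG1 hGg (hπmem t)).continuous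
      have hpair : StronglyMeasurable fun x => (F.1 x, F'.1 x) :=
        (hSM _ F.2.1).prodMk (hSM _ F'.2.1)
      have hsm1 : StronglyMeasurable (γ t) := hc.comp_stronglyMeasurable hpair
      exact ⟨hsm1.measurable, hsm1.isSeparable_range⟩
    have hend0 : γ 0 = F.1 := by
      funext x
      rw [hγdef]
      dsimp only
      rw [hπid 0 (by norm_num), hG0]
    have hend1 : γ 1 = F'.1 := by
      funext x
      rw [hγdef]
      dsimp only
      rw [hπid 1 (by norm_num), hG1]
    have hDpFF' : Dp μ 2 F.1 F'.1 ≠ ∞ := NLp.dp_ne_top one_le_two F F'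
    have hDpγF : ∀ t, Dp μ 2 (γ t) F.1 ≠ ∞ := by
      intro t
      refine ne_top_of_le_ne_top hDpFF' (eLpNorm_mono fun x => ?_)
      rw [Real.norm_eq_abs, abs_of_nonneg dist_nonneg, Real.norm_eq_abs,
        abs_of_nonneg dist_nonneg]
      have h2 := hptd t 0 x
      rw [hend0] at h2
      rw [hπid 0 (by norm_num), sub_zero] at h2
      rw [h2, abs_of_nonneg (hπmem t).1]
      nlinarith [dist_nonneg (x := F.1 x) (y := F'.1 x), (hπmem t).1, (hπmem t).2]
    have hmem : ∀ t, Dp μ 2 (γ t) h ≠ ∞ := by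
      intro t
      have htri := Dp_triangle one_le_two ((hsm t).aesm μ) (F.2.1.aesm μ) (hh.aesm μ)
      exact ne_top_of_le_ne_top (ENNReal.add_ne_top.2 ⟨hDpγF t, F.2.2⟩) htri
    set c : ℝ → NLp μ h hh 2 := fun t => ⟨γ t, hsm t, hmem t⟩ with hcdef
    have hc0 : c 0 = F := Subtype.ext hend0
    have hc1 : c 1 = F' := Subtype.ext hend1
    have hgeod : ∀ s ∈ Set.Icc (0:ℝ) 1, ∀ t ∈ Set.Icc (0:ℝ) 1,
        dist (c s) (c t) = |s - t| * dist F F' := by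
      intro s hs t ht
      rw [NLp.dist_def]
      have h1 : Dp μ 2 (c s).1 (c t).1
          = eLpNorm (|s-t| • fun x => dist (F.1 x) (F'.1 x)) 2 μ := by
        unfold Dp
        congr 1
        funext x
        rw [Pi.smul_apply, smul_eq_mul]
        have h2 : (c s).1 x = γ s x := rfl
        have h3 : (c t).1 x = γ t x := rfl
        rw [h2, h3, hptd s t x, hπid s hs, hπid t ht]
      rw [h1, eLpNorm_const_smul, ENNReal.toReal_mul, toReal_enorm,
        Real.norm_eq_abs, abs_abs, NLp.dist_def]
      rfl
    have hnpcc : ∀ Z : NLp μ h hh 2, ∀ t ∈ Set.Icc (0:ℝ) 1,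
        dist Z (c t) ^ 2 ≤ (1-t) * dist Z F ^ 2 + t * dist Z F' ^ 2
          - (1-t) * t * dist F F' ^ 2 := by
      intro Z t ht
      have ht0 : 0 ≤ t := ht.1
      have ht1 : t ≤ 1 := ht.2
      have hpt : ∀ x, dist (Z.1 x) (γ t x) ^ 2 + (1-t) * t * dist (F.1 x) (F'.1 x) ^ 2
          ≤ (1-t) * dist (Z.1 x) (F.1 x) ^ 2 + t * dist (Z.1 x) (F'.1 x) ^ 2 := by
        intro x
        have H := hnpc (G (F.1 x) (F'.1 x)) (hGg _ _) (Z.1 x) t ht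
        rw [hG0, hG1] at H
        have hγtx : γ t x = G (F.1 x) (F'.1 x) t := by
          rw [hγdef]
          dsimp only
          rw [hπid t ht]
        rw [hγtx]
        linarith [H]
      have hm1 : Measurable fun x => edist (Z.1 x) (γ t x) ^ 2 :=
        (hedist_meas _ _ Z.2.1 (hsm t)).pow_const 2
      have hm2 : Measurable fun x => edist (F.1 x) (F'.1 x) ^ 2 :=
        (hedist_meas _ _ F.2.1 F'.2.1).pow_const 2
      have hm3 : Measurable fun x => edist (Z.1 x) (F.1 x) ^ 2 :=
        (hedist_meas _ _ Z.2.1 F.2.1).pow_const 2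
      have hm4 : Measurable fun x => edist (Z.1 x) (F'.1 x) ^ 2 :=
        (hedist_meas _ _ Z.2.1 F'.2.1).pow_const 2
      have hA : (∫⁻ x, edist (Z.1 x) (γ t x) ^ 2 ∂μ)
            + ENNReal.ofReal ((1-t)*t) * ∫⁻ x, edist (F.1 x) (F'.1 x) ^ 2 ∂μ
          = ∫⁻ x, (edist (Z.1 x) (γ t x) ^ 2
            + ENNReal.ofReal ((1-t)*t) * edist (F.1 x) (F'.1 x) ^ 2) ∂μ := by
        rw [lintegral_add_left hm1, lintegral_const_mul _ hm2]
      have hB : ENNReal.ofReal (1-t) * (∫⁻ x, edist (Z.1 x) (F.1 x) ^ 2 ∂μ)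
            + ENNReal.ofReal t * ∫⁻ x, edist (Z.1 x) (F'.1 x) ^ 2 ∂μ
          = ∫⁻ x, (ENNReal.ofReal (1-t) * edist (Z.1 x) (F.1 x) ^ 2
            + ENNReal.ofReal t * edist (Z.1 x) (F'.1 x) ^ 2) ∂μ := by
        rw [lintegral_add_left (hm3.const_mul _), lintegral_const_mul _ hm3,
          lintegral_const_mul _ hm4]
      have hERR : (∫⁻ x, edist (Z.1 x) (γ t x) ^ 2 ∂μ)
            + ENNReal.ofReal ((1-t)*t) * ∫⁻ x, edist (F.1 x) (F'.1 x) ^ 2 ∂μ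
          ≤ ENNReal.ofReal (1-t) * (∫⁻ x, edist (Z.1 x) (F.1 x) ^ 2 ∂μ)
            + ENNReal.ofReal t * ∫⁻ x, edist (Z.1 x) (F'.1 x) ^ 2 ∂μ := by
        rw [hA, hB]
        apply lintegral_mono
        intro x
        simp only [edist_dist]
        rw [← ENNReal.ofReal_pow dist_nonneg, ← ENNReal.ofReal_pow dist_nonneg,
          ← ENNReal.ofReal_pow dist_nonneg, ← ENNReal.ofReal_pow dist_nonneg,
          ← ENNReal.ofReal_mul (by nlinarith : (0:ℝ) ≤ (1-t)*t),
          ← ENNReal.ofReal_mul (by linarith : (0:ℝ) ≤ 1-t),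
          ← ENNReal.ofReal_mul (ht0 : (0:ℝ) ≤ t),
          ← ENNReal.ofReal_add (by positivity)
            (mul_nonneg (by nlinarith : (0:ℝ) ≤ (1-t)*t) (sq_nonneg _)),
          ← ENNReal.ofReal_add (mul_nonneg (by linarith : (0:ℝ) ≤ 1-t) (sq_nonneg _))
            (mul_nonneg ht0 (sq_nonneg _))]
        exact ENNReal.ofReal_le_ofReal (hpt x)
      have hJ1 : (∫⁻ x, edist (Z.1 x) (γ t x) ^ 2 ∂μ) ≠ ∞ := hJne Z (c t)
      have hJ2 : (∫⁻ x, edist (F.1 x) (F'.1 x) ^ 2 ∂μ) ≠ ∞ := hJne F F'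
      have hJ3 : (∫⁻ x, edist (Z.1 x) (F.1 x) ^ 2 ∂μ) ≠ ∞ := hJne Z F
      have hJ4 : (∫⁻ x, edist (Z.1 x) (F'.1 x) ^ 2 ∂μ) ≠ ∞ := hJne Z F'
      have hfinR : ENNReal.ofReal (1-t) * (∫⁻ x, edist (Z.1 x) (F.1 x) ^ 2 ∂μ)
            + ENNReal.ofReal t * (∫⁻ x, edist (Z.1 x) (F'.1 x) ^ 2 ∂μ) ≠ ∞ :=
        ENNReal.add_ne_top.2 ⟨ENNReal.mul_ne_top ENNReal.ofReal_ne_top hJ3,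
          ENNReal.mul_ne_top ENNReal.ofReal_ne_top hJ4⟩
      have htr := ENNReal.toReal_mono hfinR hERR
      rw [ENNReal.toReal_add hJ1 (ENNReal.mul_ne_top ENNReal.ofReal_ne_top hJ2),
        ENNReal.toReal_add (ENNReal.mul_ne_top ENNReal.ofReal_ne_top hJ3)
          (ENNReal.mul_ne_top ENNReal.ofReal_ne_top hJ4),
        ENNReal.toReal_mul, ENNReal.toReal_mul, ENNReal.toReal_mul,
        ENNReal.toReal_ofReal (by nlinarith), ENNReal.toReal_ofReal (by linarith),
        ENNReal.toReal_ofReal (by linarith)] at htr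
      have e1 : dist Z (c t) ^ 2 = (∫⁻ x, edist (Z.1 x) (γ t x) ^ 2 ∂μ).toReal :=
        hdist_sq Z (c t)
      have e2 : dist Z F ^ 2 = (∫⁻ x, edist (Z.1 x) (F.1 x) ^ 2 ∂μ).toReal := hdist_sq Z F
      have e3 : dist Z F' ^ 2 = (∫⁻ x, edist (Z.1 x) (F'.1 x) ^ 2 ∂μ).toReal := hdist_sq Z F'
      have e4 : dist F F' ^ 2 = (∫⁻ x, edist (F.1 x) (F'.1 x) ^ 2 ∂μ).toReal := hdist_sq F F'
      rw [e1, e2, e3, e4]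
      linarith [htr]
    exact ⟨c, hc0, hc1, hgeod, hnpcc⟩
  refine ⟨hcomplete, ?_, ?_⟩
  · intro F F'
    obtain ⟨c, hc0, hc1, hgeod, _⟩ := key F F'
    exact ⟨c, hc0, hc1, hgeod⟩
  · intro c hc F t ht
    obtain ⟨c', hc0', hc1', hgeod', hnpc'⟩ := key (c 0) (c 1)
    have h0mem : (0:ℝ) ∈ Set.Icc (0:ℝ) 1 := by norm_num
    have h1mem : (1:ℝ) ∈ Set.Icc (0:ℝ) 1 := by norm_num
    have e1 : dist (c t) (c 0) = t * dist (c 0) (c 1) := by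
      rw [hc t ht 0 h0mem, sub_zero, abs_of_nonneg ht.1]
    have e2 : dist (c t) (c 1) = (1-t) * dist (c 0) (c 1) := by
      rw [hc t ht 1 h1mem, abs_of_nonpos (by linarith [ht.2] : t - 1 ≤ 0)]
      ring
    have H0 := hnpc' (c t) t ht
    rw [e1, e2] at H0
    have hd2 : dist (c t) (c' t) ^ 2 ≤ 0 := by nlinarith [H0]
    have hd0 : dist (c t) (c' t) = 0 :=
      (pow_eq_zero_iff (by norm_num : (2:ℕ) ≠ 0)).mp (le_antisymm hd2 (sq_nonneg _))
    have hFct : dist F (c t) = dist F (c' t) := by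
      apply le_antisymm
      · calc dist F (c t) ≤ dist F (c' t) + dist (c' t) (c t) := dist_triangle _ _ _
          _ = dist F (c' t) := by rw [dist_comm (c' t) (c t), hd0, add_zero]
      · calc dist F (c' t) ≤ dist F (c t) + dist (c t) (c' t) := dist_triangle _ _ _
          _ = dist F (c t) := by rw [hd0, add_zero]
    rw [hFct]
    exact hnpc' F t ht


end NLS
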